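/- arXiv:2112.03211 — 5 statements merged into one kernel-verified Lean document; each statement's English description precedes it below -/
import Mathlib

section
/- Let N ≥ 0, and let p, q ∈ [0,1] with p + q > 0. Suppose H is uniformly distributed on {0,1,...,N}, and conditionally on {H = k}, the random variables E_fn and E_fp are independent, with E_fn binomial with parameters (k, p) and E_fp binomial with parameters (N−k, q). Then P[E_fn = E_fp] = (1 − (1 − (p+q))^{N+1}) / ((N+1)(p+q)). -/
open Finset

noncomputable def Pb (r : ℝ) (k i : ℕ) : ℝ := (k.choose i : ℝ) * r ^ i * (1 - r) ^ (k - i)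

lemma Pb_succ (r : ℝ) (k i : ℕ) :
    Pb r (k+1) i = (1-r) * Pb r k i + r * (if i = 0 then 0 else Pb r k (i-1)) := by
  cases i with
  | zero => simp [Pb]; ring
  | succ j =>
    simp only [Pb, if_neg (Nat.succ_ne_zero j), Nat.succ_sub_one]
    rw [Nat.choose_succ_succ]
    push_cast
    have key : (k.choose (j+1) : ℝ) * (1-r)^(k-(j+1)) * (1-r)
        = (k.choose (j+1) : ℝ) * (1-r)^(k-j) := by
      rcases le_or_gt (j+1) k with h | h
      · rw [mul_assoc, ← pow_succ]; congr 2; omega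
      · rw [Nat.choose_eq_zero_of_lt h]; simp
    simp only [Nat.succ_eq_add_one]
    linear_combination (-(r^(j+1))) * key

lemma Pb_zero_left (r : ℝ) (i : ℕ) : Pb r 0 i = if i = 0 then 1 else 0 := by
  cases i with
  | zero => simp [Pb]
  | succ j => simp [Pb, Nat.choose_eq_zero_of_lt (Nat.succ_pos j)]

lemma Pb_top (r : ℝ) (k : ℕ) : Pb r k (k+1) = 0 := by
  simp [Pb, Nat.choose_eq_zero_of_lt (Nat.lt_succ_self k)]

lemma Pb_sum (r : ℝ) (k : ℕ) : ∑ i ∈ range (k+1), Pb r k i = 1 := by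
  have h := add_pow r (1-r) k
  simp only [add_sub_cancel, one_pow] at h
  rw [h]
  apply Finset.sum_congr rfl
  intro i _
  simp [Pb]; ring

lemma shift (r : ℝ) (k : ℕ) (g : ℕ → ℝ) :
    ∑ i ∈ range (k+2), Pb r (k+1) i * g i
      = (1-r) * ∑ i ∈ range (k+1), Pb r k i * g i
        + r * ∑ i ∈ range (k+1), Pb r k i * g (i+1) := by
  have : ∀ i, Pb r (k+1) i * g i
      = (1-r) * (Pb r k i * g i) + r * ((if i = 0 then 0 else Pb r k (i-1)) * g i) := by
    intro i; rw [Pb_succ]; ring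
  rw [Finset.sum_congr rfl (fun i _ => this i), Finset.sum_add_distrib, ← Finset.mul_sum,
    ← Finset.mul_sum]
  congr 1
  · rw [Finset.sum_range_succ, Pb_top]
    simp
  · congr 1
    rw [Finset.sum_range_succ']
    simp

noncomputable def ff (p q : ℝ) (k m : ℕ) : ℝ := ∑ i ∈ range (k+1), Pb p k i * Pb q m i
noncomputable def uu (p q : ℝ) (k m : ℕ) : ℝ := ∑ i ∈ range (k+1), Pb p k i * Pb q m (i+1)
noncomputable def dd (p q : ℝ) (k m : ℕ) : ℝ :=
  ∑ i ∈ range (k+1), Pb p k i * (∑ j ∈ range (i+1), Pb q m j)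

lemma ff_succ (p q : ℝ) (k m : ℕ) :
    ff p q (k+1) m = (1-p) * ff p q k m + p * uu p q k m := by
  simpa [ff, uu] using shift p k (fun i => Pb q m i)

lemma dd_succ_left (p q : ℝ) (k m : ℕ) :
    dd p q (k+1) m = dd p q k m + p * uu p q k m := by
  have h := shift p k (fun i => ∑ j ∈ range (i+1), Pb q m j)
  beta_reduce at h
  have h2 : ∑ i ∈ range (k+1), Pb p k i * (∑ j ∈ range (i+1+1), Pb q m j)
      = dd p q k m + uu p q k m := by
    rw [dd, uu, ← Finset.sum_add_distrib]
    apply Finset.sum_congr rfl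
    intro i _
    rw [Finset.sum_range_succ]
    ring
  rw [dd, h, h2, dd]
  ring

lemma dd_succ_right (p q : ℝ) (k m : ℕ) :
    dd p q k (m+1) = dd p q k m - q * ff p q k m := by
  have inner : ∀ i, ∑ j ∈ range (i+1), Pb q (m+1) j
      = (∑ j ∈ range (i+1), Pb q m j) - q * Pb q m i := by
    intro i
    have : ∀ j, Pb q (m+1) j
        = (1-q) * Pb q m j + q * (if j = 0 then 0 else Pb q m (j-1)) := fun j => Pb_succ q m j
    rw [Finset.sum_congr rfl (fun j _ => this j), Finset.sum_add_distrib, ← Finset.mul_sum,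
      ← Finset.mul_sum]
    have h3 : ∑ j ∈ range (i+1), (if j = 0 then 0 else Pb q m (j-1))
        = ∑ j ∈ range i, Pb q m j := by
      rw [Finset.sum_range_succ']
      simp
    rw [h3]
    have h4 : ∑ j ∈ range i, Pb q m j = (∑ j ∈ range (i+1), Pb q m j) - Pb q m i := by
      rw [Finset.sum_range_succ]; ring
    rw [h4]
    ring
  rw [dd, Finset.sum_congr rfl (fun i _ => by rw [inner i]), dd, ff, Finset.mul_sum, ← Finset.sum_sub_distrib]
  apply Finset.sum_congr rfl
  intro i _
  ring

lemma dd_top (p q : ℝ) (n : ℕ) : dd p q n 0 = 1 := by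
  have inner : ∀ i : ℕ, ∑ j ∈ range (i+1), Pb q 0 j = 1 := by
    intro i
    rw [Finset.sum_congr rfl (fun j _ => Pb_zero_left q j)]
    simp
  rw [dd, Finset.sum_congr rfl (fun i _ => by rw [inner i])]
  simpa using Pb_sum p n

lemma dd_bot (p q : ℝ) (m : ℕ) : dd p q 0 m = (1-q)^m := by
  simp [dd, Pb, Nat.choose]

lemma ff_bot (p q : ℝ) (m : ℕ) : ff p q 0 m = (1-q)^m := by
  simp [ff, Pb, Nat.choose]

lemma telescope (p q : ℝ) (N : ℕ) :
    ∑ k ∈ range (N+1), (q * ff p q k (N-k) + p * uu p q k (N-k))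
      = 1 - (1-q)^(N+1) := by
  have key : ∀ k ∈ range (N+1),
      q * ff p q k (N-k) + p * uu p q k (N-k)
        = dd p q (k+1) (N+1-(k+1)) - dd p q k (N+1-k) := by
    intro k hk
    rw [Finset.mem_range] at hk
    have h1 : N + 1 - (k+1) = N - k := by omega
    have h2 : N + 1 - k = (N - k) + 1 := by omega
    rw [h1, h2, dd_succ_left, dd_succ_right]
    ring
  rw [Finset.sum_congr rfl key, Finset.sum_range_sub (fun k => dd p q k (N+1-k))]
  simp [dd_top, dd_bot]

lemma S_formula (p q : ℝ) (N : ℕ) :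
    ∑ k ∈ range (N+1), ff p q k (N-k) = ∑ m ∈ range (N+1), (1-(p+q))^m := by
  induction N with
  | zero => simp [ff, Pb]
  | succ n ih =>
    have step : ∑ k ∈ range (n+2), ff p q k (n+1-k)
        = ff p q 0 (n+1) + ∑ k ∈ range (n+1), ff p q (k+1) (n-k) := by
      rw [Finset.sum_range_succ']
      have : ∀ k ∈ range (n+1), ff p q (k+1) (n+1-(k+1)) = ff p q (k+1) (n-k) := by
        intro k hk
        congr 1
        omega
      rw [Finset.sum_congr rfl this]
      simp only [Nat.sub_zero]
      ring
    have expand : ∑ k ∈ range (n+1), ff p q (k+1) (n-k)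
        = (1-p) * (∑ k ∈ range (n+1), ff p q k (n-k))
          + ∑ k ∈ range (n+1), p * uu p q k (n-k) := by
      rw [Finset.mul_sum, ← Finset.sum_add_distrib]
      apply Finset.sum_congr rfl
      intro k _
      rw [ff_succ]
    have tele := telescope p q n
    have hpu : ∑ k ∈ range (n+1), p * uu p q k (n-k)
        = 1 - (1-q)^(n+1) - q * ∑ k ∈ range (n+1), ff p q k (n-k) := by
      rw [Finset.sum_add_distrib, ← Finset.mul_sum] at tele
      linarith
    have geo : ∑ m ∈ range (n+2), (1-(p+q))^m
        = (1-(p+q)) * ∑ m ∈ range (n+1), (1-(p+q))^m + 1 := by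
      rw [Finset.sum_range_succ', Finset.mul_sum]
      simp only [pow_succ, pow_zero]
      rw [Finset.sum_congr rfl (fun i (_ : i ∈ range (n+1)) =>
        mul_comm ((1-(p+q))^i) (1-(p+q)))]
    rw [step, expand, hpu, ff_bot, ih, geo]
    ring

theorem stmt_0 (N : ℕ) (p q : ℝ) (hp : p ∈ Set.Icc (0:ℝ) 1) (hq : q ∈ Set.Icc (0:ℝ) 1)
    (hpq : 0 < p + q) :
    (1 / ((N:ℝ) + 1)) *
      ∑ k ∈ Finset.range (N + 1), ∑ j ∈ Finset.range (k + 1),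
        (k.choose j : ℝ) * ((N - k).choose j : ℝ) *
          p ^ j * (1 - p) ^ (k - j) * q ^ j * (1 - q) ^ (N - k - j)
    = (1 - (1 - (p + q)) ^ (N + 1)) / (((N:ℝ) + 1) * (p + q)) := by
  have inner : ∀ k ∈ range (N+1),
      (∑ j ∈ Finset.range (k + 1),
        (k.choose j : ℝ) * ((N - k).choose j : ℝ) *
          p ^ j * (1 - p) ^ (k - j) * q ^ j * (1 - q) ^ (N - k - j))
      = ff p q k (N-k) := by
    intro k _
    apply Finset.sum_congr rfl
    intro j _
    simp only [ff, Pb]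
    ring
  rw [Finset.sum_congr rfl inner, S_formula p q N]
  have hx : (1 - (p+q)) ≠ 1 := by intro h; nlinarith
  have hN : ((N:ℝ) + 1) ≠ 0 := by positivity
  have hpq' : p + q ≠ 0 := ne_of_gt hpq
  have hx1 : (1 - (p + q)) - 1 ≠ 0 := by intro h; apply hpq'; linarith
  have key : ((1 - (p+q))^(N+1) - 1) / ((1 - (p+q)) - 1)
      = (1 - (1-(p+q))^(N+1)) / (p+q) := by
    rw [div_eq_div_iff hx1 hpq']
    ring
  rw [geom_sum_eq hx, key]
  rw [one_div_mul_eq_div, div_div, mul_comm (p+q) ((N:ℝ)+1)]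
end

section
/- For all integers N ≥ 0 and reals p, q ∈ [0,1], the double sum γ_N := Σ_{k=0}^{N} Σ_{j=0}^{k} C(k,j) C(N−k,j) p^j (1−p)^{k−j} q^j (1−q)^{N−k−j} satisfies the recursion γ_N = (2 − p − q) γ_{N−1} + (p + q − 1) γ_{N−2} for all N ≥ 2, with initial conditions γ_0 = 1 and γ_1 = 2 − (p+q). -/
open Finset

private def Fbb (p q : ℝ) (a b : ℕ) : ℝ :=
  ∑ j ∈ Finset.range (a + 1),
    (a.choose j : ℝ) * (b.choose j : ℝ) * p ^ j * (1 - p) ^ (a - j) * q ^ j * (1 - q) ^ (b - j)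

lemma F_term (p q : ℝ) (a b j : ℕ) (hj : j ≤ a) :
    (((a+1).choose (j+1) : ℝ) * ((b+1).choose (j+1) : ℝ) * p ^ (j+1) * (1 - p) ^ (a+1 - (j+1)) * q ^ (j+1) * (1 - q) ^ (b+1 - (j+1)))
    = (1 - p) * ((a.choose (j+1) : ℝ) * ((b+1).choose (j+1) : ℝ) * p ^ (j+1) * (1 - p) ^ (a - (j+1)) * q ^ (j+1) * (1 - q) ^ (b+1 - (j+1)))
    + (1 - q) * (((a+1).choose (j+1) : ℝ) * (b.choose (j+1) : ℝ) * p ^ (j+1) * (1 - p) ^ (a+1 - (j+1)) * q ^ (j+1) * (1 - q) ^ (b - (j+1)))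
    + p * q * ((a.choose j : ℝ) * (b.choose j : ℝ) * p ^ j * (1 - p) ^ (a - j) * q ^ j * (1 - q) ^ (b - j))
    - (1 - p) * (1 - q) * ((a.choose (j+1) : ℝ) * (b.choose (j+1) : ℝ) * p ^ (j+1) * (1 - p) ^ (a - (j+1)) * q ^ (j+1) * (1 - q) ^ (b - (j+1))) := by
  rcases hj.lt_or_eq with ha | rfl
  · -- j < a
    have e1 : a + 1 - (j+1) = (a - (j+1)) + 1 := by omega
    have e2 : a - j = (a - (j+1)) + 1 := by omega
    rcases Nat.lt_or_ge j b with hb | hb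
    · have e3 : b + 1 - (j+1) = (b - (j+1)) + 1 := by omega
      have e4 : b - j = (b - (j+1)) + 1 := by omega
      rw [e1, e2, e3, e4, Nat.choose_succ_succ a j, Nat.choose_succ_succ b j]
      push_cast
      ring
    · -- b ≤ j
      rcases hb.lt_or_eq with hb' | rfl
      · -- b < j
        rw [Nat.choose_eq_zero_of_lt (show b < j+1 by omega),
            Nat.choose_eq_zero_of_lt hb',
            Nat.choose_eq_zero_of_lt (show b+1 < j+1 by omega)]
        push_cast
        ring
      · -- b = j
        rw [e1, e2, Nat.choose_succ_succ a b, Nat.choose_succ_succ b b, Nat.choose_eq_zero_of_lt (Nat.lt_succ_self b)]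
        simp only [Nat.sub_self, Nat.succ_sub_succ, Nat.choose_self]
        push_cast
        ring
  · -- j = a
    rw [Nat.choose_eq_zero_of_lt (Nat.lt_succ_self j), Nat.choose_self (j+1)]
    simp only [Nat.sub_self, Nat.succ_sub_succ]
    rcases Nat.lt_or_ge j b with hb | hb
    · have e4 : b - j = (b - (j+1)) + 1 := by omega
      rw [e4, Nat.choose_succ_succ b j]
      simp only [Nat.choose_self]
      push_cast
      ring
    · rcases hb.lt_or_eq with hb' | rfl
      · rw [Nat.choose_eq_zero_of_lt (show b < j+1 by omega),
            Nat.choose_eq_zero_of_lt hb',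
            Nat.choose_eq_zero_of_lt (show b+1 < j+1 by omega)]
        push_cast; ring
      · rw [Nat.choose_succ_succ b b, Nat.choose_eq_zero_of_lt (Nat.lt_succ_self b)]
        simp only [Nat.sub_self, Nat.succ_sub_succ, Nat.choose_self]
        push_cast; ring


lemma F_rec (p q : ℝ) (a b : ℕ) :
    Fbb p q (a+1) (b+1) = (1-p) * Fbb p q a (b+1) + (1-q) * Fbb p q (a+1) b
      + (p*q - (1-p)*(1-q)) * Fbb p q a b := by
  show (∑ j ∈ Finset.range (a+1+1), ((a+1).choose (j) : ℝ) * ((b+1).choose (j) : ℝ) * p ^ (j) * (1 - p) ^ ((a+1) - (j)) * q ^ (j) * (1 - q) ^ ((b+1) - (j)))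
      = (1-p) * (∑ j ∈ Finset.range (a+1), ((a).choose (j) : ℝ) * ((b+1).choose (j) : ℝ) * p ^ (j) * (1 - p) ^ ((a) - (j)) * q ^ (j) * (1 - q) ^ ((b+1) - (j)))
      + (1-q) * (∑ j ∈ Finset.range (a+1+1), ((a+1).choose (j) : ℝ) * ((b).choose (j) : ℝ) * p ^ (j) * (1 - p) ^ ((a+1) - (j)) * q ^ (j) * (1 - q) ^ ((b) - (j)))
      + (p*q - (1-p)*(1-q)) * (∑ j ∈ Finset.range (a+1), ((a).choose (j) : ℝ) * ((b).choose (j) : ℝ) * p ^ (j) * (1 - p) ^ ((a) - (j)) * q ^ (j) * (1 - q) ^ ((b) - (j)))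
  have hA : (∑ j ∈ Finset.range (a+1+1), ((a+1).choose (j) : ℝ) * ((b+1).choose (j) : ℝ) * p ^ (j) * (1 - p) ^ ((a+1) - (j)) * q ^ (j) * (1 - q) ^ ((b+1) - (j)))
      = (∑ j ∈ Finset.range (a+1), ((a+1).choose (j+1) : ℝ) * ((b+1).choose (j+1) : ℝ) * p ^ (j+1) * (1 - p) ^ ((a+1) - (j+1)) * q ^ (j+1) * (1 - q) ^ ((b+1) - (j+1))) + (((a+1).choose (0) : ℝ) * ((b+1).choose (0) : ℝ) * p ^ (0) * (1 - p) ^ ((a+1) - (0)) * q ^ (0) * (1 - q) ^ ((b+1) - (0))) :=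
    Finset.sum_range_succ' _ (a+1)
  have hB : (∑ j ∈ Finset.range (a+1), ((a).choose (j) : ℝ) * ((b+1).choose (j) : ℝ) * p ^ (j) * (1 - p) ^ ((a) - (j)) * q ^ (j) * (1 - q) ^ ((b+1) - (j)))
      = (∑ j ∈ Finset.range a, ((a).choose (j+1) : ℝ) * ((b+1).choose (j+1) : ℝ) * p ^ (j+1) * (1 - p) ^ ((a) - (j+1)) * q ^ (j+1) * (1 - q) ^ ((b+1) - (j+1))) + (((a).choose (0) : ℝ) * ((b+1).choose (0) : ℝ) * p ^ (0) * (1 - p) ^ ((a) - (0)) * q ^ (0) * (1 - q) ^ ((b+1) - (0))) :=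
    Finset.sum_range_succ' _ a
  have hB2 : (∑ j ∈ Finset.range (a+1), ((a).choose (j+1) : ℝ) * ((b+1).choose (j+1) : ℝ) * p ^ (j+1) * (1 - p) ^ ((a) - (j+1)) * q ^ (j+1) * (1 - q) ^ ((b+1) - (j+1)))
      = (∑ j ∈ Finset.range a, ((a).choose (j+1) : ℝ) * ((b+1).choose (j+1) : ℝ) * p ^ (j+1) * (1 - p) ^ ((a) - (j+1)) * q ^ (j+1) * (1 - q) ^ ((b+1) - (j+1))) + (((a).choose (a+1) : ℝ) * ((b+1).choose (a+1) : ℝ) * p ^ (a+1) * (1 - p) ^ ((a) - (a+1)) * q ^ (a+1) * (1 - q) ^ ((b+1) - (a+1))) :=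
    Finset.sum_range_succ _ a
  have hB1 : (((a).choose (a+1) : ℝ) * ((b+1).choose (a+1) : ℝ) * p ^ (a+1) * (1 - p) ^ ((a) - (a+1)) * q ^ (a+1) * (1 - q) ^ ((b+1) - (a+1))) = 0 := by
    rw [Nat.choose_succ_self]; push_cast; ring
  have hC : (∑ j ∈ Finset.range (a+1+1), ((a+1).choose (j) : ℝ) * ((b).choose (j) : ℝ) * p ^ (j) * (1 - p) ^ ((a+1) - (j)) * q ^ (j) * (1 - q) ^ ((b) - (j)))
      = (∑ j ∈ Finset.range (a+1), ((a+1).choose (j+1) : ℝ) * ((b).choose (j+1) : ℝ) * p ^ (j+1) * (1 - p) ^ ((a+1) - (j+1)) * q ^ (j+1) * (1 - q) ^ ((b) - (j+1))) + (((a+1).choose (0) : ℝ) * ((b).choose (0) : ℝ) * p ^ (0) * (1 - p) ^ ((a+1) - (0)) * q ^ (0) * (1 - q) ^ ((b) - (0))) :=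
    Finset.sum_range_succ' _ (a+1)
  have hD : (∑ j ∈ Finset.range (a+1), ((a).choose (j) : ℝ) * ((b).choose (j) : ℝ) * p ^ (j) * (1 - p) ^ ((a) - (j)) * q ^ (j) * (1 - q) ^ ((b) - (j)))
      = (∑ j ∈ Finset.range a, ((a).choose (j+1) : ℝ) * ((b).choose (j+1) : ℝ) * p ^ (j+1) * (1 - p) ^ ((a) - (j+1)) * q ^ (j+1) * (1 - q) ^ ((b) - (j+1))) + (((a).choose (0) : ℝ) * ((b).choose (0) : ℝ) * p ^ (0) * (1 - p) ^ ((a) - (0)) * q ^ (0) * (1 - q) ^ ((b) - (0))) :=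
    Finset.sum_range_succ' _ a
  have hD2 : (∑ j ∈ Finset.range (a+1), ((a).choose (j+1) : ℝ) * ((b).choose (j+1) : ℝ) * p ^ (j+1) * (1 - p) ^ ((a) - (j+1)) * q ^ (j+1) * (1 - q) ^ ((b) - (j+1)))
      = (∑ j ∈ Finset.range a, ((a).choose (j+1) : ℝ) * ((b).choose (j+1) : ℝ) * p ^ (j+1) * (1 - p) ^ ((a) - (j+1)) * q ^ (j+1) * (1 - q) ^ ((b) - (j+1))) + (((a).choose (a+1) : ℝ) * ((b).choose (a+1) : ℝ) * p ^ (a+1) * (1 - p) ^ ((a) - (a+1)) * q ^ (a+1) * (1 - q) ^ ((b) - (a+1))) :=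
    Finset.sum_range_succ _ a
  have hD1 : (((a).choose (a+1) : ℝ) * ((b).choose (a+1) : ℝ) * p ^ (a+1) * (1 - p) ^ ((a) - (a+1)) * q ^ (a+1) * (1 - q) ^ ((b) - (a+1))) = 0 := by
    rw [Nat.choose_succ_self]; push_cast; ring
  have key : (∑ j ∈ Finset.range (a+1), ((a+1).choose (j+1) : ℝ) * ((b+1).choose (j+1) : ℝ) * p ^ (j+1) * (1 - p) ^ ((a+1) - (j+1)) * q ^ (j+1) * (1 - q) ^ ((b+1) - (j+1)))
      = (1-p) * (∑ j ∈ Finset.range (a+1), ((a).choose (j+1) : ℝ) * ((b+1).choose (j+1) : ℝ) * p ^ (j+1) * (1 - p) ^ ((a) - (j+1)) * q ^ (j+1) * (1 - q) ^ ((b+1) - (j+1)))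
      + (1-q) * (∑ j ∈ Finset.range (a+1), ((a+1).choose (j+1) : ℝ) * ((b).choose (j+1) : ℝ) * p ^ (j+1) * (1 - p) ^ ((a+1) - (j+1)) * q ^ (j+1) * (1 - q) ^ ((b) - (j+1)))
      + p*q * (∑ j ∈ Finset.range (a+1), ((a).choose (j) : ℝ) * ((b).choose (j) : ℝ) * p ^ (j) * (1 - p) ^ ((a) - (j)) * q ^ (j) * (1 - q) ^ ((b) - (j)))
      - (1-p)*(1-q) * (∑ j ∈ Finset.range (a+1), ((a).choose (j+1) : ℝ) * ((b).choose (j+1) : ℝ) * p ^ (j+1) * (1 - p) ^ ((a) - (j+1)) * q ^ (j+1) * (1 - q) ^ ((b) - (j+1))) := by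
    rw [Finset.mul_sum, Finset.mul_sum, Finset.mul_sum, Finset.mul_sum,
      ← Finset.sum_add_distrib, ← Finset.sum_add_distrib, ← Finset.sum_sub_distrib]
    refine Finset.sum_congr rfl fun j hj => ?_
    have hja : j ≤ a := Nat.lt_succ_iff.mp (Finset.mem_range.mp hj)
    have := F_term p q a b j hja
    convert this using 2
  have hconst : (((a+1).choose (0) : ℝ) * ((b+1).choose (0) : ℝ) * p ^ (0) * (1 - p) ^ ((a+1) - (0)) * q ^ (0) * (1 - q) ^ ((b+1) - (0))) = (1-p) * (((a).choose (0) : ℝ) * ((b+1).choose (0) : ℝ) * p ^ (0) * (1 - p) ^ ((a) - (0)) * q ^ (0) * (1 - q) ^ ((b+1) - (0))) + (1-q) * (((a+1).choose (0) : ℝ) * ((b).choose (0) : ℝ) * p ^ (0) * (1 - p) ^ ((a+1) - (0)) * q ^ (0) * (1 - q) ^ ((b) - (0)))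
      - (1-p)*(1-q) * (((a).choose (0) : ℝ) * ((b).choose (0) : ℝ) * p ^ (0) * (1 - p) ^ ((a) - (0)) * q ^ (0) * (1 - q) ^ ((b) - (0))) := by
    simp only [Nat.choose_zero_right, Nat.cast_one, pow_zero, Nat.sub_zero, one_mul, mul_one]
    rw [show a+1 = a+1 from rfl, pow_succ (1-p) a, pow_succ (1-q) b]
    ring
  linear_combination hA + key + hconst - (1-p)*hB + (1-p)*hB2 + (1-p)*hB1
    - (1-q)*hC + (1-p)*(1-q)*hD - (1-p)*(1-q)*hD2 - (1-p)*(1-q)*hD1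

lemma F_zero_right (p q : ℝ) (a : ℕ) : Fbb p q a 0 = (1 - p) ^ a := by
  rw [Fbb, Finset.sum_eq_single 0]
  · simp
  · intro j hj hj0
    rw [Nat.choose_eq_zero_of_lt (Nat.pos_of_ne_zero hj0)]
    push_cast; ring
  · simp

lemma F_zero_left (p q : ℝ) (b : ℕ) : Fbb p q 0 b = (1 - q) ^ b := by
  simp [Fbb]

theorem stmt_1 (p q : ℝ) (hp : p ∈ Set.Icc (0:ℝ) 1) (hq : q ∈ Set.Icc (0:ℝ) 1)
    (γ : ℕ → ℝ)
    (hγ : ∀ n : ℕ, γ n =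
      ∑ k ∈ Finset.range (n + 1), ∑ j ∈ Finset.range (k + 1),
        (k.choose j : ℝ) * ((n - k).choose j : ℝ) *
          p ^ j * (1 - p) ^ (k - j) * q ^ j * (1 - q) ^ (n - k - j)) :
    γ 0 = 1 ∧ γ 1 = 2 - (p + q) ∧
      ∀ N : ℕ, 2 ≤ N → γ N = (2 - p - q) * γ (N - 1) + (p + q - 1) * γ (N - 2) := by
  have hγF : ∀ n : ℕ, γ n = ∑ k ∈ Finset.range (n+1), Fbb p q k (n-k) := by
    intro n; rw [hγ n]; rfl
  refine ⟨?_, ?_, ?_⟩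
  · rw [hγ]; simp
  · rw [hγ]
    simp [Finset.sum_range_succ]
    ring
  · intro N hN
    obtain ⟨M, rfl⟩ : ∃ M, N = M + 2 := ⟨N - 2, by omega⟩
    have h1 : M + 2 - 1 = M + 1 := by omega
    have h2 : M + 2 - 2 = M := by omega
    rw [h1, h2]
    have e0 : γ (M+2) = ∑ k ∈ Finset.range (M+2+1), Fbb p q k (M+2-k) := hγF (M+2)
    have eA : (∑ k ∈ Finset.range (M+2+1), Fbb p q k (M+2-k))
        = (∑ k ∈ Finset.range (M+2), Fbb p q k (M+2-k)) + Fbb p q (M+2) 0 := by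
      rw [Finset.sum_range_succ]
      norm_num
    have eB : (∑ k ∈ Finset.range (M+2), Fbb p q k (M+2-k))
        = (∑ i ∈ Finset.range (M+1), Fbb p q (i+1) (M+2-(i+1))) + Fbb p q 0 (M+2) :=
      Finset.sum_range_succ' _ (M+1)
    have eC : ∀ i ∈ Finset.range (M+1), Fbb p q (i+1) (M+2-(i+1))
        = (1-p) * Fbb p q i (M+1-i) + (1-q) * Fbb p q (i+1) (M+1-(i+1))
          + (p*q - (1-p)*(1-q)) * Fbb p q i (M-i) := by
      intro i hi
      have hiM : i ≤ M := Nat.lt_succ_iff.mp (Finset.mem_range.mp hi)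
      have h3 : M + 2 - (i+1) = (M - i) + 1 := by omega
      have h4 : M + 1 - i = (M - i) + 1 := by omega
      have h5 : M + 1 - (i+1) = M - i := by omega
      rw [h3, h4, h5, F_rec]
    have eD : (∑ i ∈ Finset.range (M+1), Fbb p q (i+1) (M+2-(i+1)))
        = (1-p) * (∑ i ∈ Finset.range (M+1), Fbb p q i (M+1-i))
        + (1-q) * (∑ i ∈ Finset.range (M+1), Fbb p q (i+1) (M+1-(i+1)))
        + (p*q-(1-p)*(1-q)) * (∑ i ∈ Finset.range (M+1), Fbb p q i (M-i)) := by
      rw [Finset.mul_sum, Finset.mul_sum, Finset.mul_sum,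
        ← Finset.sum_add_distrib, ← Finset.sum_add_distrib]
      exact Finset.sum_congr rfl eC
    have g1 : γ (M+1) = (∑ i ∈ Finset.range (M+1), Fbb p q i (M+1-i)) + Fbb p q (M+1) 0 := by
      rw [hγF (M+1), Finset.sum_range_succ]
      norm_num
    have g2 : γ (M+1) = (∑ i ∈ Finset.range (M+1), Fbb p q (i+1) (M+1-(i+1))) + Fbb p q 0 (M+1) := by
      rw [hγF (M+1)]
      exact Finset.sum_range_succ' _ (M+1)
    have g3 : γ M = ∑ i ∈ Finset.range (M+1), Fbb p q i (M-i) := hγF M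
    have z1 : Fbb p q (M+2) 0 = (1-p) * Fbb p q (M+1) 0 := by
      rw [F_zero_right, F_zero_right, pow_succ]; ring
    have z2 : Fbb p q 0 (M+2) = (1-q) * Fbb p q 0 (M+1) := by
      rw [F_zero_left, F_zero_left, pow_succ]; ring
    linear_combination e0 + eA + eB + eD - (1-p)*g1 - (1-q)*g2
      - (p*q-(1-p)*(1-q))*g3 + z1 + z2
end

section
/- For integers N ≥ 0 and reals p, q ∈ [0,1], the double sum Σ_{k=0}^{N} Σ_{j=0}^{k} C(k,j) C(N−k,j) p^j (1−p)^{k−j} q^j (1−q)^{N−k−j} depends on p and q only through their sum p + q; i.e., if p + q = p' + q' with p', q' ∈ [0,1], the two corresponding double sums are equal. -/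
open Finset

private lemma choose_pow_step (r : ℝ) (n i : ℕ) :
    (n.choose (i+1) : ℝ) * r ^ (n - (i+1)) * r = (n.choose (i+1) : ℝ) * r ^ (n - i) := by
  rcases le_or_gt (i+1) n with h | h
  · have hn : n - i = (n - (i+1)) + 1 := by omega
    rw [hn, pow_succ]; ring
  · rw [Nat.choose_eq_zero_of_lt h]; push_cast; ring

private def Af (p q : ℝ) (a b : ℕ) : ℝ :=
  ∑ j ∈ Finset.range (a+1),
    (a.choose j : ℝ) * ((b.choose j : ℝ)) * p^j * (1-p)^(a-j) * q^j * (1-q)^(b-j)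

private lemma Af_rec (p q : ℝ) (a b : ℕ) :
    Af p q (a+1) (b+1) + (1-p-q) * Af p q a b
      = (1-q) * Af p q (a+1) b + (1-p) * Af p q a (b+1) := by
  have e1 : Af p q (a+1) (b+1)
      = (∑ i ∈ range (a+1), ((a+1).choose (i+1) : ℝ) * ((b+1).choose (i+1) : ℝ)
          * p^(i+1) * (1-p)^(a-i) * q^(i+1) * (1-q)^(b-i))
        + (1-p)^(a+1) * (1-q)^(b+1) := by
    rw [Af, Finset.sum_range_succ']
    simp only [Nat.succ_sub_succ, Nat.choose_zero_right, Nat.cast_one, Nat.sub_zero,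
      pow_zero]
    ring
  have e2 : (1-q) * Af p q (a+1) b
      = (∑ i ∈ range (a+1), ((a+1).choose (i+1) : ℝ) * ((b).choose (i+1) : ℝ)
          * p^(i+1) * (1-p)^(a-i) * q^(i+1) * (1-q)^(b-i))
        + (1-p)^(a+1) * (1-q)^(b+1) := by
    rw [Af, Finset.sum_range_succ', mul_add, Finset.mul_sum]
    congr 1
    · refine Finset.sum_congr rfl fun i _ => ?_
      simp only [Nat.succ_sub_succ]
      linear_combination (((a+1).choose (i+1) : ℝ) * p^(i+1) * (1-p)^(a-i) * q^(i+1))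
        * choose_pow_step (1-q) b i
    · simp only [Nat.choose_zero_right, Nat.cast_one, Nat.sub_zero, pow_zero]
      ring
  have e3 : (1-p) * Af p q a (b+1)
      = (∑ i ∈ range (a+1), ((a).choose (i+1) : ℝ) * ((b+1).choose (i+1) : ℝ)
          * p^(i+1) * (1-p)^(a-i) * q^(i+1) * (1-q)^(b-i))
        + (1-p)^(a+1) * (1-q)^(b+1) := by
    rw [Af, Finset.sum_range_succ', mul_add, Finset.mul_sum]
    congr 1
    · rw [Finset.sum_range_succ, Nat.choose_succ_self]
      push_cast
      rw [zero_mul, zero_mul, zero_mul, zero_mul, zero_mul, add_zero]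
      refine Finset.sum_congr rfl fun i _ => ?_
      linear_combination (((b+1).choose (i+1) : ℝ) * p^(i+1)
        * q^(i+1) * (1-q)^(b-i)) * choose_pow_step (1-p) a i
    · simp only [Nat.choose_zero_right, Nat.cast_one, Nat.sub_zero, pow_zero]
      ring
  have e4 : (∑ i ∈ range (a+1), ((a).choose i : ℝ) * ((b).choose i : ℝ)
          * p^(i+1) * (1-p)^(a-i) * q^(i+1) * (1-q)^(b-i))
      = p * q * Af p q a b := by
    rw [Af, Finset.mul_sum]
    refine Finset.sum_congr rfl fun i _ => ?_
    ring
  have e5 : (∑ i ∈ range (a+1), ((a).choose (i+1) : ℝ) * ((b).choose (i+1) : ℝ)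
          * p^(i+1) * (1-p)^(a-i) * q^(i+1) * (1-q)^(b-i))
      = (1-p) * (1-q) * (Af p q a b - (1-p)^a * (1-q)^b) := by
    have expand : Af p q a b
        = (∑ i ∈ range a, ((a).choose (i+1) : ℝ) * ((b).choose (i+1) : ℝ)
            * p^(i+1) * (1-p)^(a-(i+1)) * q^(i+1) * (1-q)^(b-(i+1)))
          + (1-p)^a * (1-q)^b := by
      rw [Af, Finset.sum_range_succ']
      simp only [Nat.choose_zero_right, Nat.cast_one, Nat.sub_zero, pow_zero]
      ring
    rw [expand, Finset.sum_range_succ, Nat.choose_succ_self]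
    push_cast
    rw [zero_mul, zero_mul, zero_mul, zero_mul, zero_mul, add_zero,
      add_sub_cancel_right, Finset.mul_sum]
    refine Finset.sum_congr rfl fun i hi => ?_
    rcases le_or_gt (i+1) a with ha | ha
    · rcases le_or_gt (i+1) b with hb | hb
      · have h1 : a - i = (a-(i+1)) + 1 := by omega
        have h2 : b - i = (b-(i+1)) + 1 := by omega
        rw [h1, h2, pow_succ, pow_succ]; ring
      · rw [Nat.choose_eq_zero_of_lt hb]; push_cast; ring
    · rw [Nat.choose_eq_zero_of_lt ha]; push_cast; ring
  have key : (∑ i ∈ range (a+1), ((a+1).choose (i+1) : ℝ) * ((b+1).choose (i+1) : ℝ)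
          * p^(i+1) * (1-p)^(a-i) * q^(i+1) * (1-q)^(b-i))
        + (∑ i ∈ range (a+1), ((a).choose (i+1) : ℝ) * ((b).choose (i+1) : ℝ)
          * p^(i+1) * (1-p)^(a-i) * q^(i+1) * (1-q)^(b-i))
      = (∑ i ∈ range (a+1), ((a+1).choose (i+1) : ℝ) * ((b).choose (i+1) : ℝ)
          * p^(i+1) * (1-p)^(a-i) * q^(i+1) * (1-q)^(b-i))
        + ((∑ i ∈ range (a+1), ((a).choose (i+1) : ℝ) * ((b+1).choose (i+1) : ℝ)
          * p^(i+1) * (1-p)^(a-i) * q^(i+1) * (1-q)^(b-i))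
        + (∑ i ∈ range (a+1), ((a).choose i : ℝ) * ((b).choose i : ℝ)
          * p^(i+1) * (1-p)^(a-i) * q^(i+1) * (1-q)^(b-i))) := by
    rw [← Finset.sum_add_distrib, ← Finset.sum_add_distrib, ← Finset.sum_add_distrib]
    refine Finset.sum_congr rfl fun i _ => ?_
    have h1 : (a+1).choose (i+1) = a.choose i + a.choose (i+1) := Nat.choose_succ_succ _ _
    have h2 : (b+1).choose (i+1) = b.choose i + b.choose (i+1) := Nat.choose_succ_succ _ _
    rw [h1, h2]
    push_cast
    ring
  rw [e1, e2, e3]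
  linear_combination key - e5 + e4

private lemma Af_right (p q : ℝ) (a : ℕ) : Af p q a 0 = (1-p)^a := by
  rw [Af, Finset.sum_eq_single 0]
  · simp
  · intro j _ hj
    rw [Nat.choose_eq_zero_of_lt (Nat.pos_of_ne_zero hj)]
    push_cast; ring
  · intro h; simp at h

private lemma Af_left (p q : ℝ) (b : ℕ) : Af p q 0 b = (1-q)^b := by
  rw [Af]; simp

private lemma S_rec (p q : ℝ) (N : ℕ) :
    (∑ k ∈ range (N+3), Af p q k (N+2-k)) + (1-p-q) * ∑ k ∈ range (N+1), Af p q k (N-k)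
      = (2-p-q) * ∑ k ∈ range (N+2), Af p q k (N+1-k) := by
  have h1 : ∑ k ∈ range (N+3), Af p q k (N+2-k)
      = Af p q 0 (N+2) + Af p q (N+2) 0
        + ∑ i ∈ range (N+1), Af p q (i+1) ((N-i)+1) := by
    rw [Finset.sum_range_succ, Finset.sum_range_succ', Nat.sub_self]
    have hc : ∑ i ∈ range (N+1), Af p q (i+1) (N+2-(i+1))
        = ∑ i ∈ range (N+1), Af p q (i+1) ((N-i)+1) := by
      refine Finset.sum_congr rfl fun i hi => ?_
      have := Finset.mem_range.mp hi
      congr 1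
      omega
    rw [hc]; simp only [Nat.sub_zero]; ring
  have h2 : ∑ k ∈ range (N+2), Af p q k (N+1-k)
      = Af p q 0 (N+1) + ∑ i ∈ range (N+1), Af p q (i+1) (N-i) := by
    rw [Finset.sum_range_succ']
    have hc : ∑ i ∈ range (N+1), Af p q (i+1) (N+1-(i+1))
        = ∑ i ∈ range (N+1), Af p q (i+1) (N-i) := by
      refine Finset.sum_congr rfl fun i hi => ?_
      congr 1
      omega
    rw [hc]; simp only [Nat.sub_zero]; ring
  have h3 : ∑ k ∈ range (N+2), Af p q k (N+1-k)
      = (∑ i ∈ range (N+1), Af p q i ((N-i)+1)) + Af p q (N+1) 0 := by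
    rw [Finset.sum_range_succ, Nat.sub_self]
    have hc : ∑ i ∈ range (N+1), Af p q i (N+1-i)
        = ∑ i ∈ range (N+1), Af p q i ((N-i)+1) := by
      refine Finset.sum_congr rfl fun i hi => ?_
      have := Finset.mem_range.mp hi
      congr 1
      omega
    rw [hc]
  have h4 : ∑ i ∈ range (N+1), Af p q (i+1) ((N-i)+1)
      = (1-q) * (∑ i ∈ range (N+1), Af p q (i+1) (N-i))
        + (1-p) * (∑ i ∈ range (N+1), Af p q i ((N-i)+1))
        - (1-p-q) * (∑ i ∈ range (N+1), Af p q i (N-i)) := by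
    rw [Finset.mul_sum, Finset.mul_sum, Finset.mul_sum, ← Finset.sum_add_distrib,
      ← Finset.sum_sub_distrib]
    refine Finset.sum_congr rfl fun i _ => ?_
    linear_combination Af_rec p q i (N-i)
  rw [h1, h4]
  have hU : ∑ i ∈ range (N+1), Af p q (i+1) (N-i)
      = (∑ k ∈ range (N+2), Af p q k (N+1-k)) - Af p q 0 (N+1) := by
    linarith [h2]
  have hV : ∑ i ∈ range (N+1), Af p q i ((N-i)+1)
      = (∑ k ∈ range (N+2), Af p q k (N+1-k)) - Af p q (N+1) 0 := by
    linarith [h3]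
  rw [hU, hV, Af_left, Af_left, Af_right, Af_right]
  ring

private lemma S_closed (p q : ℝ) (N : ℕ) :
    ∑ k ∈ range (N+1), Af p q k (N-k) = ∑ k ∈ range (N+1), (1-p-q)^k := by
  induction N using Nat.twoStepInduction with
  | zero =>
    simp [Af]
  | one =>
    simp [Finset.sum_range_succ, Af_left, Af_right]
    ring
  | more n ih1 ih2 =>
    have := S_rec p q n
    rw [show n+1+1 = n+2 from rfl] at *
    rw [ih1] at this
    rw [ih2] at this
    have goal2 : ∑ k ∈ range (n+3), Af p q k (n+2-k)
        = (2-p-q) * (∑ k ∈ range (n+2), (1-p-q)^k)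
          - (1-p-q) * ∑ k ∈ range (n+1), (1-p-q)^k := by linarith
    rw [show n+2+1 = n+3 from rfl, goal2, Finset.sum_range_succ (n := n+2),
      Finset.sum_range_succ (n := n+1)]
    ring


theorem stmt_2 (N : ℕ) (p q p' q' : ℝ)
    (hp : p ∈ Set.Icc (0:ℝ) 1) (hq : q ∈ Set.Icc (0:ℝ) 1)
    (hp' : p' ∈ Set.Icc (0:ℝ) 1) (hq' : q' ∈ Set.Icc (0:ℝ) 1)
    (hsum : p + q = p' + q') :
    ∑ k ∈ Finset.range (N + 1), ∑ j ∈ Finset.range (k + 1),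
        (k.choose j : ℝ) * ((N - k).choose j : ℝ) *
          p ^ j * (1 - p) ^ (k - j) * q ^ j * (1 - q) ^ (N - k - j)
    = ∑ k ∈ Finset.range (N + 1), ∑ j ∈ Finset.range (k + 1),
        (k.choose j : ℝ) * ((N - k).choose j : ℝ) *
          p' ^ j * (1 - p') ^ (k - j) * q' ^ j * (1 - q') ^ (N - k - j) := by
  calc ∑ k ∈ Finset.range (N + 1), ∑ j ∈ Finset.range (k + 1),
        (k.choose j : ℝ) * ((N - k).choose j : ℝ) *
          p ^ j * (1 - p) ^ (k - j) * q ^ j * (1 - q) ^ (N - k - j)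
      = ∑ k ∈ range (N+1), Af p q k (N-k) := rfl
    _ = ∑ k ∈ range (N+1), (1-p-q)^k := S_closed p q N
    _ = ∑ k ∈ range (N+1), (1-p'-q')^k := by
        rw [show (1:ℝ)-p-q = 1-p'-q' by linarith]
    _ = ∑ k ∈ range (N+1), Af p' q' k (N-k) := (S_closed p' q' N).symm
    _ = _ := rfl
end

section
/- Suppose conditionally on H = k (with H uniform on {0,...,N}), Alice's answer is Y = (H − E_fn) + E_fp, where E_fn ~ Binomial(k, p_H) and E_fp ~ Binomial(N−k, p_L) are independent. Then the event {Y = H} equals the event {E_fn = E_fp}, and hence P[Y = H] = (1 − (1 − u)^{N+1})/((N+1)u) where u = p_H + p_L > 0. -/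
open MeasureTheory Finset
open scoped ENNReal

noncomputable def binP (p : ℝ) (n i : ℕ) : ℝ := (n.choose i : ℝ) * p ^ i * (1 - p) ^ (n - i)

lemma binP_zero_of_lt {n i : ℕ} (p : ℝ) (h : n < i) : binP p n i = 0 := by
  simp [binP, Nat.choose_eq_zero_of_lt h]

lemma binP_nonneg {p : ℝ} (h0 : 0 ≤ p) (h1 : p ≤ 1) (n i : ℕ) : 0 ≤ binP p n i := by
  have h2 : (0:ℝ) ≤ 1 - p := by linarith
  have h3 : (0:ℝ) ≤ (n.choose i : ℝ) := by positivity
  exact mul_nonneg (mul_nonneg h3 (pow_nonneg h0 i)) (pow_nonneg h2 _)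

lemma binP_sum (p : ℝ) (n : ℕ) : ∑ i ∈ range (n+1), binP p n i = 1 := by
  have h := add_pow p (1-p) n
  have h2 : ∑ i ∈ range (n+1), binP p n i = (p + (1-p))^n := by
    rw [h]
    exact Finset.sum_congr rfl (fun i _ => by simp [binP]; ring)
  rw [h2]; norm_num

lemma binP_succ_zero (p : ℝ) (m : ℕ) : binP p (m+1) 0 = (1-p) * binP p m 0 := by
  simp [binP]; ring

lemma binP_succ_succ (p : ℝ) (m i : ℕ) :
    binP p (m+1) (i+1) = (1-p) * binP p m (i+1) + p * binP p m i := by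
  rcases lt_trichotomy i m with h | h | h
  · have h2 : m - (i+1) + 1 = m - i := by omega
    have h3 : m + 1 - (i+1) = m - i := by omega
    simp only [binP, Nat.choose_succ_succ, h3]
    rw [← h2]
    push_cast
    ring
  · subst h
    simp only [binP, Nat.choose_succ_succ, Nat.choose_self,
      Nat.choose_succ_self, Nat.sub_self]
    push_cast
    have : i - (i+1) = 0 := by omega
    rw [this]
    ring
  · rw [binP_zero_of_lt p (by omega), binP_zero_of_lt p (by omega),
      binP_zero_of_lt p (by omega)]
    ring

noncomputable def xs (a b : ℝ) (N : ℕ) : ℝ :=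
  ∑ k ∈ range (N+1), ∑ i ∈ range (N+1), binP a k i * binP b (N-k) i

noncomputable def ys (a b : ℝ) (N : ℕ) : ℝ :=
  ∑ k ∈ range (N+1), ∑ i ∈ range (N+1), binP a k (i+1) * binP b (N-k) i

lemma xrec (a b : ℝ) (N : ℕ) :
    xs a b (N+1) = (1-a)^(N+1) + (1-b) * xs a b N + b * ys a b N := by
  unfold xs ys
  rw [Finset.sum_range_succ]
  have hlast : ∑ i ∈ range (N+1+1), binP a (N+1) i * binP b (N+1-(N+1)) i = (1-a)^(N+1) := by
    rw [Nat.sub_self]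
    rw [Finset.sum_eq_single 0]
    · simp [binP]
    · intro i _ hi
      rw [binP_zero_of_lt b (Nat.pos_of_ne_zero hi)]
      ring
    · intro h; exact absurd (Finset.mem_range.mpr (by omega)) h
  have hmain : ∀ k ∈ range (N+1),
      ∑ i ∈ range (N+1+1), binP a k i * binP b (N+1-k) i
        = (1-b) * (∑ i ∈ range (N+1), binP a k i * binP b (N-k) i)
          + b * (∑ i ∈ range (N+1), binP a k (i+1) * binP b (N-k) i) := by
    intro k hk
    have hk' : k ≤ N := Nat.lt_succ_iff.mp (Finset.mem_range.mp hk)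
    have hNk : N + 1 - k = (N - k) + 1 := by omega
    rw [hNk, Finset.sum_range_succ']
    have e1 : ∀ i ∈ range (N+1), binP a k (i+1) * binP b ((N-k)+1) (i+1)
        = (1-b) * (binP a k (i+1) * binP b (N-k) (i+1))
          + b * (binP a k (i+1) * binP b (N-k) i) := by
      intro i _; rw [binP_succ_succ]; ring
    rw [Finset.sum_congr rfl e1, Finset.sum_add_distrib, binP_succ_zero,
      ← Finset.mul_sum, ← Finset.mul_sum]
    have e4 : ∑ i ∈ range (N+1), binP a k (i+1) * binP b (N-k) (i+1)
        = ∑ i ∈ range N, binP a k (i+1) * binP b (N-k) (i+1) := by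
      rw [Finset.sum_range_succ, binP_zero_of_lt a (show k < N+1 by omega), zero_mul, add_zero]
    have e2 : ∑ i ∈ range (N+1), binP a k i * binP b (N-k) i
        = (∑ i ∈ range N, binP a k (i+1) * binP b (N-k) (i+1)) + binP a k 0 * binP b (N-k) 0 :=
      Finset.sum_range_succ' _ _
    rw [e4, e2]; ring
  rw [Finset.sum_congr rfl hmain, hlast, Finset.sum_add_distrib,
    ← Finset.mul_sum, ← Finset.mul_sum]
  ring

lemma yrec (a b : ℝ) (N : ℕ) :
    ys a b (N+1) = (1-a) * ys a b N + a * xs a b N := by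
  unfold xs ys
  rw [Finset.sum_range_succ']
  have h0 : ∑ i ∈ range (N+1+1), binP a 0 (i+1) * binP b (N+1-0) i = 0 := by
    apply Finset.sum_eq_zero
    intro i _
    rw [binP_zero_of_lt a (Nat.succ_pos i), zero_mul]
  have hmain : ∀ k ∈ range (N+1),
      ∑ i ∈ range (N+1+1), binP a (k+1) (i+1) * binP b (N+1-(k+1)) i
        = (1-a) * (∑ i ∈ range (N+1), binP a k (i+1) * binP b (N-k) i)
          + a * (∑ i ∈ range (N+1), binP a k i * binP b (N-k) i) := by
    intro k hk
    have hk' : k ≤ N := Nat.lt_succ_iff.mp (Finset.mem_range.mp hk)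
    have hNk : N+1-(k+1) = N-k := by omega
    rw [hNk]
    have e1 : ∀ i ∈ range (N+1+1), binP a (k+1) (i+1) * binP b (N-k) i
        = (1-a) * (binP a k (i+1) * binP b (N-k) i) + a * (binP a k i * binP b (N-k) i) := by
      intro i _; rw [binP_succ_succ]; ring
    rw [Finset.sum_congr rfl e1, Finset.sum_add_distrib, ← Finset.mul_sum, ← Finset.mul_sum]
    have t1 : ∑ i ∈ range (N+1+1), binP a k (i+1) * binP b (N-k) i
        = ∑ i ∈ range (N+1), binP a k (i+1) * binP b (N-k) i := by
      rw [Finset.sum_range_succ, binP_zero_of_lt a (show k < N+1+1 by omega), zero_mul, add_zero]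
    have t2 : ∑ i ∈ range (N+1+1), binP a k i * binP b (N-k) i
        = ∑ i ∈ range (N+1), binP a k i * binP b (N-k) i := by
      rw [Finset.sum_range_succ, binP_zero_of_lt a (show k < N+1 by omega), zero_mul, add_zero]
    rw [t1, t2]
  rw [Finset.sum_congr rfl hmain, h0, add_zero, Finset.sum_add_distrib,
    ← Finset.mul_sum, ← Finset.mul_sum]

lemma key (a b : ℝ) (N : ℕ) :
    (a+b) * xs a b N = 1 - (1-a-b)^(N+1) ∧
    b*(a+b) * ys a b N = b + a*(1-a-b)^(N+1) - (b + a*(1-a-b)) * (1-a)^N := by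
  induction N with
  | zero =>
    constructor
    · have : xs a b 0 = 1 := by simp [xs, binP]
      rw [this]; ring
    · have : ys a b 0 = 0 := by simp [ys, binP]
      rw [this]; ring
  | succ n ih =>
    obtain ⟨ih1, ih2⟩ := ih
    constructor
    · rw [xrec]
      linear_combination (1-b) * ih1 + ih2
    · rw [yrec]
      linear_combination (1-a) * ih2 + a*b*ih1

lemma tsum_binP (p : ℝ) (hp0 : 0 ≤ p) (hp1 : p ≤ 1) (m : ℕ) :
    ∑' j : ℕ, ENNReal.ofReal (binP p m j) = 1 := by
  rw [tsum_eq_sum (s := Finset.range (m+1))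
    (fun j hj => by
      rw [binP_zero_of_lt p (by simpa using hj), ENNReal.ofReal_zero])]
  rw [← ENNReal.ofReal_sum_of_nonneg (fun i _ => binP_nonneg hp0 hp1 m i), binP_sum,
    ENNReal.ofReal_one]

def diagEquiv : (ℕ × ℕ) ≃ {p : ℕ × ℕ × ℕ // p.2.1 = p.2.2} where
  toFun q := ⟨(q.1, q.2, q.2), rfl⟩
  invFun p := (p.1.1, p.1.2.1)
  left_inv q := rfl
  right_inv p := by
    obtain ⟨⟨k, i, j⟩, (hp : i = j)⟩ := p
    subst hp
    rfl

theorem stmt_15 {Ω : Type*} [MeasurableSpace Ω] (μ : Measure Ω) [IsProbabilityMeasure μ]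
    (N : ℕ) (hN : 1 ≤ N) (pH pL : ℝ)
    (hpH : pH ∈ Set.Icc (0:ℝ) 1) (hpL : pL ∈ Set.Icc (0:ℝ) 1)
    (u : ℝ) (hu : u = pH + pL) (hupos : 0 < u)
    (H Efn Efp Y : Ω → ℕ)
    (hHr : ∀ ω, H ω ≤ N)
    (huni : ∀ k ≤ N, μ {ω | H ω = k} = 1 / ((N:ℝ≥0∞) + 1))
    -- conditionally on H = k, Efn and Efp are independent binomials (k, pH), (N - k, pL)
    (hcond : ∀ k ≤ N, ∀ i j : ℕ,
      μ ({ω | H ω = k} ∩ {ω | Efn ω = i} ∩ {ω | Efp ω = j})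
        = μ {ω | H ω = k}
          * ENNReal.ofReal ((k.choose i : ℝ) * pH ^ i * (1 - pH) ^ (k - i))
          * ENNReal.ofReal (((N - k).choose j : ℝ) * pL ^ j * (1 - pL) ^ (N - k - j)))
    (hY : ∀ ω, (Y ω : ℤ) = (H ω : ℤ) - (Efn ω : ℤ) + (Efp ω : ℤ)) :
    {ω | Y ω = H ω} = {ω | Efn ω = Efp ω} ∧
    μ {ω | Y ω = H ω}
      = ENNReal.ofReal ((1 - (1 - u) ^ (N + 1)) / (((N:ℝ) + 1) * u)) := by
  obtain ⟨hpH0, hpH1⟩ := hpH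
  obtain ⟨hpL0, hpL1⟩ := hpL
  have hset : {ω | Y ω = H ω} = {ω | Efn ω = Efp ω} := by
    ext ω
    simp only [Set.mem_setOf_eq]
    have := hY ω
    omega
  refine ⟨hset, ?_⟩
  rw [hset]
  set c : ℝ≥0∞ := 1 / ((N:ℝ≥0∞)+1) with hc
  set A : ℕ × ℕ × ℕ → Set Ω :=
    fun p => {ω | H ω = p.1} ∩ {ω | Efn ω = p.2.1} ∩ {ω | Efp ω = p.2.2} with hA
  have hμA : ∀ k i j : ℕ, k ≤ N →
      μ (A (k,i,j)) = c * ENNReal.ofReal (binP pH k i) * ENNReal.ofReal (binP pL (N-k) j) := by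
    intro k i j hk
    have h := hcond k hk i j
    rw [huni k hk] at h
    exact h
  have hμA0 : ∀ k i j : ℕ, N < k → μ (A (k,i,j)) = 0 := by
    intro k i j hk
    have hsub : A (k,i,j) ⊆ {ω | H ω = k} := fun ω h => h.1.1
    have hempty : {ω | H ω = k} = (∅ : Set Ω) := by
      ext ω
      simp only [Set.mem_setOf_eq, Set.mem_empty_iff_false, iff_false]
      intro h
      have := hHr ω
      omega
    have hle : μ (A (k,i,j)) ≤ μ {ω | H ω = k} := measure_mono hsub
    rw [hempty] at hle
    simpa using hle
  have hrowk : ∀ k : ℕ, k ≤ N → ∑' i : ℕ, ∑' j : ℕ, μ (A (k,i,j)) = c := by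
    intro k hk
    calc ∑' i : ℕ, ∑' j : ℕ, μ (A (k,i,j))
        = ∑' i : ℕ, ∑' j : ℕ,
            c * ENNReal.ofReal (binP pH k i) * ENNReal.ofReal (binP pL (N-k) j) :=
          tsum_congr fun i => tsum_congr fun j => hμA k i j hk
      _ = ∑' i : ℕ, c * ENNReal.ofReal (binP pH k i)
            * ∑' j : ℕ, ENNReal.ofReal (binP pL (N-k) j) := by
          exact tsum_congr fun i => by rw [← ENNReal.tsum_mul_left]
      _ = ∑' i : ℕ, c * ENNReal.ofReal (binP pH k i) := by
          rw [tsum_binP pL hpL0 hpL1]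
          simp
      _ = c * ∑' i : ℕ, ENNReal.ofReal (binP pH k i) := ENNReal.tsum_mul_left
      _ = c := by rw [tsum_binP pH hpH0 hpH1, mul_one]
  have hcne : ((N:ℝ≥0∞)+1) ≠ 0 := by
    simp
  have hcnetop : ((N:ℝ≥0∞)+1) ≠ ⊤ := by
    exact ENNReal.add_ne_top.mpr ⟨ENNReal.natCast_ne_top N, ENNReal.one_ne_top⟩
  have hT : ∑' p : ℕ × ℕ × ℕ, μ (A p) = 1 := by
    rw [show (∑' p : ℕ × ℕ × ℕ, μ (A p)) = ∑' k : ℕ, ∑' q : ℕ × ℕ, μ (A (k, q)) from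
      ENNReal.tsum_prod']
    have step1 : ∀ k : ℕ, ∑' q : ℕ × ℕ, μ (A (k, q)) = ∑' i : ℕ, ∑' j : ℕ, μ (A (k,i,j)) :=
      fun k => ENNReal.tsum_prod'
    calc ∑' k : ℕ, ∑' q : ℕ × ℕ, μ (A (k, q))
        = ∑' k : ℕ, ∑' i : ℕ, ∑' j : ℕ, μ (A (k,i,j)) := tsum_congr step1
      _ = ∑ k ∈ range (N+1), ∑' i : ℕ, ∑' j : ℕ, μ (A (k,i,j)) := by
          apply tsum_eq_sum
          intro k hk
          have hk' : N < k := by simpa using hk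
          calc ∑' i : ℕ, ∑' j : ℕ, μ (A (k,i,j))
              = ∑' i : ℕ, ∑' j : ℕ, (0:ℝ≥0∞) :=
                tsum_congr fun i => tsum_congr fun j => hμA0 k i j hk'
            _ = 0 := by simp
      _ = ∑ k ∈ range (N+1), c := Finset.sum_congr rfl fun k hk =>
          hrowk k (Nat.lt_succ_iff.mp (Finset.mem_range.mp hk))
      _ = 1 := by
          rw [Finset.sum_const, Finset.card_range, nsmul_eq_mul, hc, one_div]
          have hcast : ((N+1 : ℕ) : ℝ≥0∞) = (N:ℝ≥0∞)+1 := by push_cast; ring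
          rw [hcast, ENNReal.mul_inv_cancel hcne hcnetop]
  have hS : ∑' q : ℕ × ℕ, μ (A (q.1, q.2, q.2)) = c * ENNReal.ofReal (xs pH pL N) := by
    rw [show (∑' q : ℕ × ℕ, μ (A (q.1, q.2, q.2))) = ∑' k : ℕ, ∑' i : ℕ, μ (A (k, i, i)) from
      ENNReal.tsum_prod']
    calc ∑' k : ℕ, ∑' i : ℕ, μ (A (k,i,i))
        = ∑ k ∈ range (N+1), ∑' i : ℕ, μ (A (k,i,i)) := by
          apply tsum_eq_sum
          intro k hk
          have hk' : N < k := by simpa using hk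
          calc ∑' i : ℕ, μ (A (k,i,i)) = ∑' i : ℕ, (0:ℝ≥0∞) :=
                tsum_congr fun i => hμA0 k i i hk'
            _ = 0 := by simp
      _ = ∑ k ∈ range (N+1), ∑ i ∈ range (N+1), μ (A (k,i,i)) := by
          apply Finset.sum_congr rfl
          intro k hk
          have hk' : k ≤ N := Nat.lt_succ_iff.mp (Finset.mem_range.mp hk)
          apply tsum_eq_sum
          intro i hi
          have hi' : N < i := by simpa using hi
          rw [hμA k i i hk', binP_zero_of_lt pH (by omega), ENNReal.ofReal_zero,
            mul_zero, zero_mul]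
      _ = ∑ k ∈ range (N+1), ∑ i ∈ range (N+1),
            c * ENNReal.ofReal (binP pH k i * binP pL (N-k) i) := by
          apply Finset.sum_congr rfl
          intro k hk
          apply Finset.sum_congr rfl
          intro i _
          have hk' : k ≤ N := Nat.lt_succ_iff.mp (Finset.mem_range.mp hk)
          rw [hμA k i i hk', ENNReal.ofReal_mul (binP_nonneg hpH0 hpH1 k i), mul_assoc]
      _ = c * ENNReal.ofReal (xs pH pL N) := by
          have hnn : ∀ k i : ℕ, 0 ≤ binP pH k i * binP pL (N-k) i :=
            fun k i => mul_nonneg (binP_nonneg hpH0 hpH1 k i) (binP_nonneg hpL0 hpL1 _ i)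
          unfold xs
          rw [ENNReal.ofReal_sum_of_nonneg (fun k _ => Finset.sum_nonneg fun i _ => hnn k i),
            Finset.mul_sum]
          apply Finset.sum_congr rfl
          intro k _
          rw [ENNReal.ofReal_sum_of_nonneg (fun i _ => hnn k i), Finset.mul_sum]
  have hs : ∀ p : ℕ × ℕ × ℕ, p ∈ ({p : ℕ × ℕ × ℕ | p.2.1 = p.2.2}) ↔ p.2.1 = p.2.2 :=
    fun p => Iff.rfl
  set s : Set (ℕ × ℕ × ℕ) := {p | p.2.1 = p.2.2} with hsdef
  set U : Set Ω := {ω | Efn ω = Efp ω} with hUdef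
  have hU : μ U ≤ ∑' q : ℕ × ℕ, μ (A (q.1, q.2, q.2)) := by
    refine le_trans (measure_mono ?_) (measure_iUnion_le _)
    intro ω hω
    exact Set.mem_iUnion.mpr ⟨(H ω, Efn ω), ⟨⟨rfl, rfl⟩, hω.symm⟩⟩
  have hV : μ Uᶜ ≤ ∑' p : ↥sᶜ, μ (A ↑p) := by
    refine le_trans (measure_mono ?_) (measure_iUnion_le _)
    intro ω hω
    have hω' : ¬ (Efn ω = Efp ω) := hω
    exact Set.mem_iUnion.mpr ⟨⟨(H ω, Efn ω, Efp ω), hω'⟩, ⟨⟨rfl, rfl⟩, rfl⟩⟩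
  have hdiag : ∑' p : ↥s, μ (A ↑p) = ∑' q : ℕ × ℕ, μ (A (q.1, q.2, q.2)) := by
    exact (Equiv.tsum_eq diagEquiv (fun p : ↥s => μ (A ↑p))).symm
  have hsplit : (∑' p : ↥s, μ (A ↑p)) + (∑' p : ↥sᶜ, μ (A ↑p)) = 1 := by
    rw [← hT]
    exact Summable.tsum_add_tsum_compl (f := fun p => μ (A p)) (s := s) ENNReal.summable ENNReal.summable
  set SU := ∑' q : ℕ × ℕ, μ (A (q.1, q.2, q.2)) with hSU
  set SV := ∑' p : ↥sᶜ, μ (A ↑p) with hSV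
  have hsplit' : SU + SV = 1 := by rw [← hdiag]; exact hsplit
  have hSVtop : SV ≠ ⊤ := by
    intro h
    rw [h] at hsplit'
    simp at hsplit'
  have hone : (1:ℝ≥0∞) ≤ μ U + μ Uᶜ := by
    have h1 : μ (U ∪ Uᶜ) ≤ μ U + μ Uᶜ := measure_union_le U Uᶜ
    rwa [Set.union_compl_self, measure_univ] at h1
  have hμU : μ U = SU := by
    refine le_antisymm hU ?_
    have h2 : SU + SV ≤ μ U + SV := by
      calc SU + SV = 1 := hsplit'
        _ ≤ μ U + μ Uᶜ := hone
        _ ≤ μ U + SV := add_le_add_right hV _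
    exact (ENNReal.add_le_add_iff_right hSVtop).mp h2
  rw [hμU, hS]
  -- final arithmetic
  have hkey := (key pH pL N).1
  have hNne : ((N:ℝ)+1) ≠ 0 := by positivity
  have hupos' : (0:ℝ) < pH + pL := hu ▸ hupos
  have hxs : xs pH pL N = (1 - (1 - u) ^ (N + 1)) / u := by
    rw [hu, eq_div_iff (ne_of_gt hupos')]
    linear_combination hkey
  have harith : (1 - (1 - u) ^ (N + 1)) / (((N:ℝ) + 1) * u) = xs pH pL N / ((N:ℝ)+1) := by
    rw [hxs, mul_comm ((N:ℝ)+1) u, ← div_div]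
  rw [harith, ENNReal.ofReal_div_of_pos (by positivity : (0:ℝ) < (N:ℝ)+1)]
  have hofN : ENNReal.ofReal ((N:ℝ)+1) = (N:ℝ≥0∞)+1 := by
    rw [ENNReal.ofReal_add (by positivity) zero_le_one, ENNReal.ofReal_one,
      ENNReal.ofReal_natCast]
  rw [hofN, hc, one_div, div_eq_mul_inv]
  exact mul_comm _ _
end

section
/- For p, q ∈ [0,1] and n ≥ 1, the double sum γ_n = Σ_{k=0}^{n} Σ_{j=0}^{k} C(k,j) C(n−k,j) p^j(1−p)^{k−j} q^j(1−q)^{n−k−j} admits the closed form: if p + q ≠ 0 then γ_n = (1 − (1−p−q)^{n+1})/(p+q), and if p + q = 0 then γ_n = n+1. -/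
open Finset

noncomputable def s19f (x y a b : ℝ) (k l : ℕ) : ℝ :=
  ∑ j ∈ Finset.range (k+1),
    (k.choose j : ℝ) * (l.choose j : ℝ) * x^j * y^j * a^(k-j) * b^(l-j)

noncomputable def s19g (x y a b : ℝ) (k l : ℕ) : ℝ :=
  ∑ j ∈ Finset.range (k+1),
    (k.choose j : ℝ) * (l.choose (j+1) : ℝ) * x^j * y^j * a^(k-j) * b^(l-(j+1))

lemma s19f_zero (x y a b : ℝ) (l : ℕ) : s19f x y a b 0 l = b^l := by
  simp [s19f]

lemma s19g_zero (x y a b : ℝ) (k : ℕ) : s19g x y a b k 0 = 0 := by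
  simp [s19g]

lemma s19R1 (x y a b : ℝ) (k l : ℕ) :
    s19f x y a b (k+1) l = a * s19f x y a b k l + x*y * s19g x y a b k l := by
  set h : ℕ → ℝ := fun j =>
    (k.choose j : ℝ) * (l.choose j : ℝ) * x^j * y^j * a^(k-j) * b^(l-j) with hh
  have e1 : ∑ j ∈ Finset.range (k+2), h j = s19f x y a b k l := by
    rw [Finset.sum_range_succ]
    simp [s19f, hh, Nat.choose_succ_self]
  have e2 : ∑ j ∈ Finset.range (k+2), h j
      = (∑ j ∈ Finset.range (k+1), h (j+1)) + h 0 :=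
    Finset.sum_range_succ' h (k+1)
  have key : ∀ j ∈ Finset.range (k+1),
      ((k+1).choose (j+1) : ℝ) * (l.choose (j+1) : ℝ) * x^(j+1) * y^(j+1)
        * a^(k+1-(j+1)) * b^(l-(j+1))
      = x*y*((k.choose j : ℝ) * (l.choose (j+1) : ℝ) * x^j * y^j * a^(k-j) * b^(l-(j+1)))
        + a * h (j+1) := by
    intro j hj
    simp only [Finset.mem_range] at hj
    rw [Nat.succ_sub_succ, Nat.choose_succ_succ]
    push_cast
    rcases lt_or_ge j k with hlt | hge
    · have hk : k - j = (k - (j+1)) + 1 := by omega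
      rw [hh]
      simp only []
      rw [hk]
      ring
    · have : j = k := by omega
      subst this
      simp [hh, Nat.choose_succ_self]
      ring
  rw [s19f, Finset.sum_range_succ']
  rw [Finset.sum_congr rfl key, Finset.sum_add_distrib, ← Finset.mul_sum, ← Finset.mul_sum]
  have e3 : ∑ j ∈ Finset.range (k+1), h (j+1) = s19f x y a b k l - h 0 := by
    rw [← e1, e2]; ring
  rw [e3]
  have h0 : h 0 = a^k * b^l := by simp [hh]
  rw [h0]
  simp only [Nat.choose_zero_right, Nat.cast_one, pow_zero, Nat.sub_zero]
  rw [s19g]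
  ring

lemma s19R2 (x y a b : ℝ) (k l : ℕ) :
    s19g x y a b k (l+1) = b * s19g x y a b k l + s19f x y a b k l := by
  rw [s19g, s19g, s19f, Finset.mul_sum, ← Finset.sum_add_distrib]
  apply Finset.sum_congr rfl
  intro j _
  rw [Nat.succ_sub_succ, Nat.choose_succ_succ]
  push_cast
  rcases lt_or_ge j l with hlt | hge
  · have hl : l - j = (l - (j+1)) + 1 := by omega
    rw [hl]
    ring
  · have hz : l.choose (j+1) = 0 := Nat.choose_eq_zero_of_lt (by omega)
    rw [hz]
    push_cast
    ring

noncomputable def s19S (x y a b : ℝ) (n : ℕ) : ℝ :=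
  ∑ k ∈ Finset.range (n+1), s19f x y a b k (n-k)

noncomputable def s19U (x y a b : ℝ) (n : ℕ) : ℝ :=
  ∑ k ∈ Finset.range (n+1), s19g x y a b k (n-k)

lemma s19A (x y a b : ℝ) (n : ℕ) :
    s19S x y a b (n+1) = b^(n+1) + a * s19S x y a b n + x*y * s19U x y a b n := by
  rw [s19S, Finset.sum_range_succ']
  have key : ∀ k ∈ Finset.range (n+1),
      s19f x y a b (k+1) (n+1-(k+1))
      = a * s19f x y a b k (n-k) + x*y * s19g x y a b k (n-k) := by
    intro k _
    rw [Nat.succ_sub_succ]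
    exact s19R1 x y a b k (n-k)
  rw [Finset.sum_congr rfl key, Finset.sum_add_distrib, ← Finset.mul_sum, ← Finset.mul_sum,
    Nat.sub_zero, s19f_zero, s19S, s19U]
  ring

lemma s19B (x y a b : ℝ) (n : ℕ) :
    s19U x y a b (n+1) = b * s19U x y a b n + s19S x y a b n := by
  rw [s19U, Finset.sum_range_succ, Nat.sub_self, s19g_zero]
  have key : ∀ k ∈ Finset.range (n+1),
      s19g x y a b k (n+1-k)
      = b * s19g x y a b k (n-k) + s19f x y a b k (n-k) := by
    intro k hk
    simp only [Finset.mem_range] at hk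
    have : n + 1 - k = (n - k) + 1 := by omega
    rw [this]
    exact s19R2 x y a b k (n-k)
  rw [Finset.sum_congr rfl key, Finset.sum_add_distrib, ← Finset.mul_sum, s19U, s19S]
  ring

lemma s19rec (x y a b : ℝ) (n : ℕ) :
    s19S x y a b (n+2) = (a+b) * s19S x y a b (n+1) - (a*b - x*y) * s19S x y a b n := by
  have A1 := s19A x y a b n
  have A2 := s19A x y a b (n+1)
  have B1 := s19B x y a b n
  have : (n+1)+1 = n+2 := rfl
  rw [this] at A2
  linear_combination A2 + x*y*B1 - b*A1

lemma s19closed (p q : ℝ) (n : ℕ) :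
    s19S p q (1-p) (1-q) n = ∑ m ∈ Finset.range (n+1), (1-p-q)^m := by
  induction n using Nat.twoStepInduction with
  | zero => simp [s19S, s19f]
  | one =>
      rw [s19S]
      simp [Finset.sum_range_succ, s19f]
      ring
  | more n ih1 ih2 =>
      rw [s19rec, ih1, ih2]
      rw [Finset.sum_range_succ (f := fun m => (1-p-q)^m) (n := n+2),
        Finset.sum_range_succ (f := fun m => (1-p-q)^m) (n := n+1)]
      ring

theorem stmt_19 (n : ℕ) (hn : 1 ≤ n) (p q : ℝ)
    (hp : p ∈ Set.Icc (0:ℝ) 1) (hq : q ∈ Set.Icc (0:ℝ) 1)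
    (γ : ℝ)
    (hγ : γ = ∑ k ∈ Finset.range (n + 1), ∑ j ∈ Finset.range (k + 1),
      (k.choose j : ℝ) * ((n - k).choose j : ℝ) *
        p ^ j * (1 - p) ^ (k - j) * q ^ j * (1 - q) ^ (n - k - j)) :
    (p + q ≠ 0 → γ = (1 - (1 - p - q) ^ (n + 1)) / (p + q)) ∧
    (p + q = 0 → γ = (n : ℝ) + 1) := by
  have hγ' : γ = ∑ m ∈ Finset.range (n+1), (1-p-q)^m := by
    rw [hγ, ← s19closed p q n, s19S]
    apply Finset.sum_congr rfl
    intro k _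
    rw [s19f]
    apply Finset.sum_congr rfl
    intro j _
    ring
  constructor
  · intro hpq
    have hr : (1 - p - q) ≠ 1 := fun h => hpq (by linarith)
    rw [hγ', geom_sum_eq hr]
    have h1 : (1 - p - q) - 1 ≠ 0 := fun h => hpq (by linarith)
    field_simp
    ring
  · intro hpq
    have : 1 - p - q = 1 := by linarith
    rw [hγ', this]
    simp
end
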